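/- (Pósa's lemma) Let G be a graph, let P = v₀, v₁, …, v_t be a longest path in G, and let R be the set of all vertices v ∈ V(P) such that there exists a path P' in G with V(P') = V(P) and with endpoints v₀ and v. Then |N(R)| ≤ 2|R| − 1, where N(R) denotes the external neighbourhood of R in G. -/

import Mathlib

/-- The external neighbourhood of a vertex set `U`. -/
def extNbhd {V : Type*} (G : SimpleGraph V) (U : Set V) : Set V :=
  {v | v ∉ U ∧ ∃ u ∈ U, G.Adj u v}

namespace PosaProof

open SimpleGraph Walk

variable {V : Type*} {G : SimpleGraph V}

lemma start_unique {a b x y : V} (Q : G.Walk a b) (hQ : Q.IsPath)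
    (hx : s(a,x) ∈ Q.edges) (hy : s(a,y) ∈ Q.edges) : x = y := by
  cases Q with
  | nil => simp at hx
  | @cons _ c _ h Q₁ =>
    rw [Walk.cons_isPath_iff] at hQ
    have key : ∀ z, s(a,z) ∈ (Walk.cons h Q₁).edges → z = c := by
      intro z hz
      rw [Walk.edges_cons, List.mem_cons] at hz
      rcases hz with hz | hz
      · rw [Sym2.eq_iff] at hz
        rcases hz with ⟨_, rfl⟩ | ⟨h1, rfl⟩
        · rfl
        · exact absurd h1 h.ne
      · exact absurd (Q₁.fst_mem_support_of_mem_edges hz) hQ.2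
    rw [key x hx, key y hy]

lemma two_nbrs {a b u x y z : V} (Q : G.Walk a b) (hQ : Q.IsPath)
    (hx : s(u,x) ∈ Q.edges) (hy : s(u,y) ∈ Q.edges) (hz : s(u,z) ∈ Q.edges) :
    x = y ∨ x = z ∨ y = z := by
  induction Q with
  | nil => simp at hx
  | @cons a c b h Q₁ ih =>
    rw [Walk.cons_isPath_iff] at hQ
    by_cases hu : u = a
    · subst hu
      have key : ∀ w, s(u,w) ∈ (Walk.cons h Q₁).edges → w = c := by
        intro w hw
        rw [Walk.edges_cons, List.mem_cons] at hw
        rcases hw with hw | hw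
        · rw [Sym2.eq_iff] at hw
          rcases hw with ⟨_, rfl⟩ | ⟨h1, rfl⟩
          · rfl
          · exact absurd h1 h.ne
        · exact absurd (Q₁.fst_mem_support_of_mem_edges hw) hQ.2
      rw [key x hx, key y hy]
      left; rfl
    · -- u ≠ a; each edge is either the head edge (then u = c, partner = a) or in Q₁
      have case_edge : ∀ w, s(u,w) ∈ (Walk.cons h Q₁).edges →
          (u = c ∧ w = a) ∨ s(u,w) ∈ Q₁.edges := by
        intro w hw
        rw [Walk.edges_cons, List.mem_cons] at hw
        rcases hw with hw | hw
        · rw [Sym2.eq_iff] at hw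
          rcases hw with ⟨h1, _⟩ | ⟨h1, h2⟩
          · exact absurd h1 hu
          · exact Or.inl ⟨h1, h2⟩
        · exact Or.inr hw
      rcases case_edge x hx with ⟨rfl, rfl⟩ | hx'
      · -- u = c, x = a
        rcases case_edge y hy with ⟨_, rfl⟩ | hy'
        · left; rfl
        · rcases case_edge z hz with ⟨_, rfl⟩ | hz'
          · right; left; rfl
          · right; right; exact start_unique Q₁ hQ.1 hy' hz'
      · rcases case_edge y hy with ⟨rfl, rfl⟩ | hy'
        · rcases case_edge z hz with ⟨_, rfl⟩ | hz'
          · right; right; rfl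
          · right; left; exact start_unique Q₁ hQ.1 hx' hz'
        · rcases case_edge z hz with ⟨rfl, rfl⟩ | hz'
          · left; exact start_unique Q₁ hQ.1 hx' hy'
          · exact ih hQ.1 hx' hy' hz'

lemma consec_of_edge {a b x y : V} (Q : G.Walk a b) (h : s(x,y) ∈ Q.edges) :
    ∃ i, (Q.support[i]? = some x ∧ Q.support[i+1]? = some y) ∨
         (Q.support[i]? = some y ∧ Q.support[i+1]? = some x) := by
  induction Q with
  | nil => simp at h
  | @cons a c b hadj Q₁ ih =>
    rw [Walk.edges_cons, List.mem_cons] at h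
    rcases h with h | h
    · refine ⟨0, ?_⟩
      have hsup : (Walk.cons hadj Q₁).support = a :: Q₁.support := Walk.support_cons hadj Q₁
      have h1 : Q₁.support = c :: Q₁.support.tail := Q₁.support_eq_cons
      rw [Sym2.eq_iff] at h
      rcases h with ⟨rfl, rfl⟩ | ⟨rfl, rfl⟩
      · left
        constructor
        · simp [hsup]
        · rw [hsup, List.getElem?_cons_succ, h1, List.getElem?_cons_zero]
      · right
        constructor
        · simp [hsup]
        · rw [hsup, List.getElem?_cons_succ, h1, List.getElem?_cons_zero]
    · obtain ⟨i, hi⟩ := ih h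
      refine ⟨i+1, ?_⟩
      rw [Walk.support_cons, List.getElem?_cons_succ, List.getElem?_cons_succ]
      exact hi

lemma last_support {a b : V} (Q : G.Walk a b) :
    Q.support[Q.support.length - 1]? = some b := by
  induction Q with
  | nil => simp
  | @cons a c b hadj Q₁ ih =>
    rw [Walk.support_cons]
    have hlen : Q₁.support.length ≥ 1 := by
      have := Q₁.support_ne_nil
      cases hs : Q₁.support with
      | nil => exact absurd hs this
      | cons _ _ => simp [hs]
    have : (a :: Q₁.support).length - 1 = (Q₁.support.length - 1) + 1 := by
      simp only [List.length_cons]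
      omega
    rw [this, List.getElem?_cons_succ]
    exact ih

lemma adj_of_consec {a b x y : V} (Q : G.Walk a b) {i : ℕ}
    (hx : Q.support[i]? = some x) (hy : Q.support[i+1]? = some y) : G.Adj x y := by
  have hchain := Q.isChain_adj_support
  have hi1 : i + 1 < Q.support.length := by
    by_contra hc
    rw [List.getElem?_eq_none (by omega)] at hy
    exact nomatch hy
  have hi : i < Q.support.length := by omega
  rw [List.getElem?_eq_getElem hi] at hx
  rw [List.getElem?_eq_getElem hi1] at hy
  obtain rfl : Q.support[i] = x := Option.some.inj hx
  obtain rfl : Q.support[i+1] = y := Option.some.inj hy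
  have := List.isChain_iff_getElem.mp hchain i (by omega)
  simpa using this

section Main

variable (G) (v₀ : V) (S : Set V)

/-- A witness: a path from `v₀` whose support set is `S`. -/
def IsWit (W : Σ r : V, G.Walk v₀ r) : Prop :=
  W.2.IsPath ∧ {y | y ∈ W.2.support} = S

/-- Semantic rotation step. -/
def RotStep (W W' : Σ r : V, G.Walk v₀ r) : Prop :=
  IsWit G v₀ S W ∧ IsWit G v₀ S W' ∧
  ∃ u w, G.Adj u W.1 ∧ s(u,w) ∈ W.2.edges ∧ W'.1 = w ∧ s(u, W.1) ∈ W'.2.edges ∧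
    (∀ e ∈ W.2.edges, e ≠ s(u,w) → e ∈ W'.2.edges) ∧
    (∀ e ∈ W'.2.edges, e ≠ s(u, W.1) → e ∈ W.2.edges)

def Reach : (Σ r : V, G.Walk v₀ r) → (Σ r : V, G.Walk v₀ r) → Prop :=
  Relation.ReflTransGen (RotStep G v₀ S)

/-- Endpoints reachable from a given witness. -/
def Rset (W : Σ r : V, G.Walk v₀ r) : Set V :=
  {r | ∃ W', (Reach G v₀ S W W' ∧ IsWit G v₀ S W') ∧ W'.1 = r}

/-- All endpoints of witnesses. -/
def Rall : Set V := {v | ∃ Q : G.Walk v₀ v, Q.IsPath ∧ {y | y ∈ Q.support} = S}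

variable {G v₀ S}

lemma rotStep_symm : Symmetric (RotStep G v₀ S) := by
  rintro W W' ⟨h1, h2, u, w, hadj, hew, hend, her, hfwd, hbwd⟩
  subst hend
  exact ⟨h2, h1, u, W.1, Walk.adj_of_mem_edges _ hew, her, rfl, hew,
    fun e he hne => hbwd e he hne, fun e he hne => hfwd e he hne⟩

lemma reach_symm {W W' : Σ r : V, G.Walk v₀ r} (h : Reach G v₀ S W W') :
    Reach G v₀ S W' W :=
  by
  haveI : Std.Symm (RotStep G v₀ S) := ⟨fun _ _ h => rotStep_symm h⟩
  exact (Relation.ReflTransGen.stdSymm (r := RotStep G v₀ S)).symm _ _ h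

lemma end_mem_rset {W : Σ r : V, G.Walk v₀ r} (hW : IsWit G v₀ S W) : W.1 ∈ Rset G v₀ S W :=
  ⟨W, ⟨Relation.ReflTransGen.refl, hW⟩, rfl⟩

lemma rset_subset_rall {W : Σ r : V, G.Walk v₀ r} : Rset G v₀ S W ⊆ Rall G v₀ S := by
  rintro r ⟨W', ⟨_, hwit⟩, rfl⟩
  exact ⟨W'.2, hwit.1, hwit.2⟩

lemma rall_subset_S {v : V} (hv : v ∈ Rall G v₀ S) : v ∈ S := by
  obtain ⟨Q, _, hQS⟩ := hv
  rw [← hQS]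
  exact Q.end_mem_support

/-- Two nodup lists with the same members have the same length. -/
lemma nodup_same_mem_length {l₁ l₂ : List V} (h₁ : l₁.Nodup) (h₂ : l₂.Nodup)
    (h : ∀ a, a ∈ l₁ ↔ a ∈ l₂) : l₁.length = l₂.length := by
  classical
  have : l₁.toFinset = l₂.toFinset := by
    ext a; simp [h a]
  have c1 := List.toFinset_card_of_nodup h₁
  have c2 := List.toFinset_card_of_nodup h₂
  rw [← c1, ← c2, this]

lemma wit_length {W : Σ r : V, G.Walk v₀ r} (hW : IsWit G v₀ S W)
    {W' : Σ r : V, G.Walk v₀ r} (hW' : IsWit G v₀ S W') :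
    W.2.length = W'.2.length := by
  have := nodup_same_mem_length hW.1.support_nodup hW'.1.support_nodup (by
    intro a
    have h1 := Set.ext_iff.mp hW.2 a
    have h2 := Set.ext_iff.mp hW'.2 a
    simp only [Set.mem_setOf_eq] at h1 h2
    rw [h1, h2])
  rw [Walk.length_support, Walk.length_support] at this
  omega

/-- The rotation construction. -/
lemma rot_exists {W : Σ r : V, G.Walk v₀ r} (hW : IsWit G v₀ S W)
    {u : V} (hu : u ∈ W.2.support) (hne : u ≠ W.1) (hadj : G.Adj u W.1) :
    ∃ w, s(u,w) ∈ W.2.edges ∧ ∃ W', RotStep G v₀ S W W' ∧ W'.1 = w := by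
  classical
  obtain ⟨r, Q⟩ := W
  simp only at hu hne hadj ⊢
  set T := Q.takeUntil u hu with hT
  set D := Q.dropUntil u hu with hD
  have hspec : T.append D = Q := Q.take_spec hu
  have hDnotnil : ¬ D.Nil := Walk.not_nil_of_ne hne
  rw [Walk.not_nil_iff] at hDnotnil
  obtain ⟨w, huw, D', hD'⟩ := hDnotnil
  refine ⟨w, ?_, ⟨⟨w, T.append (Walk.cons hadj D'.reverse)⟩, ?_, rfl⟩⟩
  · -- s(u,w) ∈ Q.edges
    rw [← hspec, Walk.edges_append, hD', Walk.edges_cons]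
    simp
  · -- RotStep
    have hQsup : Q.support = T.support ++ D'.support := by
      rw [← hspec, Walk.support_append, hD']
      simp [Walk.support_cons]
    have hWsup : (T.append (Walk.cons hadj D'.reverse)).support
        = T.support ++ D'.support.reverse := by
      rw [Walk.support_append]
      simp [Walk.support_cons, Walk.support_reverse]
    have hperm : (T.append (Walk.cons hadj D'.reverse)).support.Perm Q.support := by
      rw [hQsup, hWsup]
      exact List.Perm.append_left _ (List.reverse_perm _)
    have hwit' : IsWit G v₀ S ⟨w, T.append (Walk.cons hadj D'.reverse)⟩ := by
      constructor
      · exact Walk.IsPath.mk' (hperm.nodup_iff.mpr hW.1.support_nodup)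
      · rw [← hW.2]
        ext y
        simp only [Set.mem_setOf_eq]
        exact ⟨fun h => hperm.mem_iff.mp h, fun h => hperm.mem_iff.mpr h⟩
    have hQedges : Q.edges = T.edges ++ (s(u,w) :: D'.edges) := by
      rw [← hspec, Walk.edges_append, hD', Walk.edges_cons]
    have hWedges : (T.append (Walk.cons hadj D'.reverse)).edges
        = T.edges ++ (s(u,r) :: D'.edges.reverse) := by
      rw [Walk.edges_append, Walk.edges_cons, Walk.edges_reverse]
    refine ⟨hW, hwit', u, w, hadj, ?_, rfl, ?_, ?_, ?_⟩
    · rw [hQedges]; simp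
    · rw [hWedges]; simp
    · intro e he hne'
      rw [hQedges, List.mem_append, List.mem_cons] at he
      rw [hWedges, List.mem_append, List.mem_cons]
      rcases he with he | he | he
      · exact Or.inl he
      · exact absurd he hne'
      · right; right; rwa [List.mem_reverse]
    · intro e he hne'
      rw [hWedges, List.mem_append, List.mem_cons] at he
      rw [hQedges, List.mem_append, List.mem_cons]
      rcases he with he | he | he
      · exact Or.inl he
      · exact absurd he hne'
      · right; right; rwa [List.mem_reverse] at he

lemma preserve {W W' : Σ r : V, G.Walk v₀ r} (h : Reach G v₀ S W W')
    {a b : V} (hab : s(a,b) ∈ W.2.edges) (ha : a ∉ Rset G v₀ S W) (hb : b ∉ Rset G v₀ S W) :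
    s(a,b) ∈ W'.2.edges := by
  induction h with
  | refl => exact hab
  | @tail X Y hWX hstep ih =>
    obtain ⟨hXwit, hYwit, u, w, huadj, hew, hend, her, hfwd, hbwd⟩ := hstep
    apply hfwd _ ih
    intro heq
    have hwR : w ∈ Rset G v₀ S W :=
      ⟨Y, ⟨hWX.tail ⟨hXwit, hYwit, u, w, huadj, hew, hend, her, hfwd, hbwd⟩, hYwit⟩, hend⟩
    rw [Sym2.eq_iff] at heq
    rcases heq with ⟨rfl, rfl⟩ | ⟨rfl, rfl⟩
    · exact hb hwR
    · exact ha hwR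

/-- The key structural lemma: any external neighbour of `Rset W₀` is consecutive (in `W₀`)
with a member of `Rset W₀`. -/
lemma key {W₀ : Σ r : V, G.Walk v₀ r} (hW₀ : IsWit G v₀ S W₀)
    (hS : ∀ r x, r ∈ Rall G v₀ S → G.Adj r x → x ∈ S)
    {x r₀ : V} (hr₀ : r₀ ∈ Rset G v₀ S W₀) (hadj : G.Adj r₀ x) (hx : x ∉ Rset G v₀ S W₀) :
    ∃ w, w ∈ Rset G v₀ S W₀ ∧ ∃ i,
      (W₀.2.support[i]? = some x ∧ W₀.2.support[i+1]? = some w) ∨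
      (W₀.2.support[i]? = some w ∧ W₀.2.support[i+1]? = some x) := by
  have hxS : x ∈ S := hS r₀ x (rset_subset_rall hr₀) hadj
  obtain ⟨W', ⟨hreach, hW'⟩, hend⟩ := hr₀
  have hxsup' : x ∈ W'.2.support := by
    have := Set.ext_iff.mp hW'.2 x
    simp only [Set.mem_setOf_eq] at this
    exact this.mpr hxS
  have hxner : x ≠ r₀ := fun h => hx (h ▸ ⟨W', ⟨hreach, hW'⟩, hend⟩)
  have hxne : x ≠ W'.1 := hend ▸ hxner
  have hadjx : G.Adj x W'.1 := hend ▸ hadj.symm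
  obtain ⟨w, hew', W'', hstep, hend''⟩ := rot_exists hW' hxsup' hxne hadjx
  have hwR : w ∈ Rset G v₀ S W₀ := ⟨W'', ⟨hreach.tail hstep, hstep.2.1⟩, hend''⟩
  by_contra hcon
  push_neg at hcon
  have hnoedge : ∀ y, s(x,y) ∈ W₀.2.edges → y ∉ Rset G v₀ S W₀ := by
    intro y hy hyR
    obtain ⟨i, hi⟩ := consec_of_edge W₀.2 hy
    rcases hi with ⟨h1, h2⟩ | ⟨h1, h2⟩
    · exact (hcon y hyR i).1 h1 h2
    · exact (hcon y hyR i).2 h1 h2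
  have hxsup0 : x ∈ W₀.2.support := by
    have := Set.ext_iff.mp hW₀.2 x
    simp only [Set.mem_setOf_eq] at this
    exact this.mpr hxS
  have hxne0 : x ≠ W₀.1 := fun h => hx (h ▸ end_mem_rset hW₀)
  by_cases hxv : x = v₀
  · -- x is the start
    have hnotnil : ¬ W₀.2.Nil := Walk.not_nil_of_ne (hxv ▸ hxne0)
    rw [Walk.not_nil_iff] at hnotnil
    obtain ⟨z, hxz, Z, hZ⟩ := hnotnil
    have hzedge : s(x, z) ∈ W₀.2.edges := by rw [hxv, hZ, Walk.edges_cons]; simp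
    have hz : z ∉ Rset G v₀ S W₀ := hnoedge z hzedge
    have hpres : s(x, z) ∈ W'.2.edges := preserve hreach hzedge hx hz
    have hxw : z = w := by
      rw [hxv] at hpres
      exact start_unique W'.2 hW'.1 hpres (hxv ▸ hew')
    exact hz (hxw ▸ hwR)
  · -- x is internal
    classical
    set T₀ := W₀.2.takeUntil x hxsup0 with hT₀
    set D₀ := W₀.2.dropUntil x hxsup0 with hD₀
    have hspec : T₀.append D₀ = W₀.2 := W₀.2.take_spec hxsup0
    -- predecessor
    have hTrev : ¬ T₀.reverse.Nil := Walk.not_nil_of_ne hxv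
    rw [Walk.not_nil_iff] at hTrev
    obtain ⟨p, hxp, T₂, hT₂⟩ := hTrev
    have hpe : s(x, p) ∈ T₀.edges := by
      have : s(x,p) ∈ T₀.reverse.edges := by rw [hT₂, Walk.edges_cons]; simp
      rwa [Walk.edges_reverse, List.mem_reverse] at this
    have hpe0 : s(x, p) ∈ W₀.2.edges := W₀.2.edges_takeUntil_subset hxsup0 hpe
    -- successor
    have hDnn : ¬ D₀.Nil := Walk.not_nil_of_ne hxne0
    rw [Walk.not_nil_iff] at hDnn
    obtain ⟨q, hxq, D₂, hD₂⟩ := hDnn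
    have hqe : s(x, q) ∈ D₀.edges := by rw [hD₂, Walk.edges_cons]; simp
    have hqe0 : s(x, q) ∈ W₀.2.edges := W₀.2.edges_dropUntil_subset hxsup0 hqe
    -- p ≠ q
    have hedges_nodup : (T₀.edges ++ D₀.edges).Nodup := by
      rw [← Walk.edges_append, hspec]
      exact hW₀.1.isTrail.edges_nodup
    have hpq : p ≠ q := by
      intro h
      subst h
      exact (List.disjoint_of_nodup_append hedges_nodup) hpe hqe
    have hp : p ∉ Rset G v₀ S W₀ := hnoedge p hpe0
    have hq : q ∉ Rset G v₀ S W₀ := hnoedge q hqe0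
    have hpres₁ : s(x, p) ∈ W'.2.edges := preserve hreach hpe0 hx hp
    have hpres₂ : s(x, q) ∈ W'.2.edges := preserve hreach hqe0 hx hq
    rcases two_nbrs W'.2 hW'.1 hpres₁ hpres₂ hew' with h | h | h
    · exact hpq h
    · exact hp (h ▸ hwR)
    · exact hq (h ▸ hwR)

section Count

variable [Fintype V]

lemma nodup_getElem_inj {L : List V} (hnodup : L.Nodup) {i j : ℕ} {a : V}
    (hi : L[i]? = some a) (hj : L[j]? = some a) : i = j := by
  obtain ⟨hlt, _⟩ := List.getElem?_eq_some_iff.mp hi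
  exact (List.getElem?_inj hlt hnodup).mp (hi.trans hj.symm)

/-- Counting, base version: `|X| ≤ 2|B| - 1` for `X` external nbrs of `B = Rset W₀`. -/
lemma count_base {W₀ : Σ r : V, G.Walk v₀ r} (hW₀ : IsWit G v₀ S W₀)
    (hS : ∀ r x, r ∈ Rall G v₀ S → G.Adj r x → x ∈ S)
    {X : Set V} (hX : ∀ x ∈ X, x ∉ Rset G v₀ S W₀ ∧ ∃ r ∈ Rset G v₀ S W₀, G.Adj r x) :
    X.ncard ≤ 2 * (Rset G v₀ S W₀).ncard - 1 := by
  classical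
  have hnodup : W₀.2.support.Nodup := hW₀.1.support_nodup
  have hdata : ∀ x ∈ X, ∃ w, w ∈ Rset G v₀ S W₀ ∧ ∃ i,
      (W₀.2.support[i]? = some x ∧ W₀.2.support[i+1]? = some w) ∨
      (W₀.2.support[i]? = some w ∧ W₀.2.support[i+1]? = some x) := by
    intro x hx
    obtain ⟨hxB, r₀, hr₀, hadj⟩ := hX x hx
    exact key hW₀ hS hr₀ hadj hxB
  choose! w hwB idx hidx using hdata
  set L := W₀.2.support with hL
  set Xt := {x ∈ X | L[idx x]? = some x ∧ L[idx x + 1]? = some (w x)} with hXt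
  set Xf := {x ∈ X | ¬(L[idx x]? = some x ∧ L[idx x + 1]? = some (w x))} with hXf
  have hXsplit : X = Xt ∪ Xf := by
    ext a
    simp only [hXt, hXf, Set.mem_union, Set.mem_setOf_eq]
    tauto
  have hXfdata : ∀ x ∈ Xf, L[idx x]? = some (w x) ∧ L[idx x + 1]? = some x := by
    rintro x ⟨hx, hnot⟩
    rcases hidx x hx with h | h
    · exact absurd h hnot
    · exact h
  have hinjTt : Set.InjOn w Xt := by
    rintro x₁ ⟨hx₁, h₁, h₁'⟩ x₂ ⟨hx₂, h₂, h₂'⟩ heq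
    rw [heq] at h₁'
    have : idx x₁ + 1 = idx x₂ + 1 := nodup_getElem_inj hnodup h₁' h₂'
    have hii : idx x₁ = idx x₂ := by omega
    rw [hii] at h₁
    exact Option.some.inj (h₁.symm.trans h₂)
  have hinjTf : Set.InjOn w Xf := by
    intro x₁ hx₁ x₂ hx₂ heq
    obtain ⟨h₁, h₁'⟩ := hXfdata x₁ hx₁
    obtain ⟨h₂, h₂'⟩ := hXfdata x₂ hx₂
    rw [heq] at h₁
    have hii : idx x₁ = idx x₂ := nodup_getElem_inj hnodup h₁ h₂
    rw [hii] at h₁'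
    exact Option.some.inj (h₁'.symm.trans h₂')
  have hend : W₀.1 ∈ Rset G v₀ S W₀ := end_mem_rset hW₀
  have hne_end : ∀ x ∈ Xf, w x ≠ W₀.1 := by
    intro x hx hwe
    obtain ⟨h₁, h₁'⟩ := hXfdata x hx
    have hlast : L[L.length - 1]? = some W₀.1 := last_support W₀.2
    rw [hwe] at h₁
    have : idx x = L.length - 1 := nodup_getElem_inj hnodup h₁ hlast
    have hlen : 1 ≤ L.length := by
      have := W₀.2.support_ne_nil
      cases hc : L with
      | nil => exact absurd hc this
      | cons _ _ => simp [hc]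
    rw [this] at h₁'
    have : L[L.length - 1 + 1]? = none := List.getElem?_eq_none (by omega)
    rw [this] at h₁'
    exact nomatch h₁'
  have hcard1 : Xt.ncard ≤ (Rset G v₀ S W₀).ncard :=
    Set.ncard_le_ncard_of_injOn w (fun x hx => hwB x hx.1) hinjTt (Set.toFinite _)
  have hcard2 : Xf.ncard ≤ (Rset G v₀ S W₀ \ {W₀.1}).ncard :=
    Set.ncard_le_ncard_of_injOn w
      (fun x hx => ⟨hwB x hx.1, hne_end x hx⟩) hinjTf (Set.toFinite _)
  have hdiff : (Rset G v₀ S W₀ \ {W₀.1}).ncard = (Rset G v₀ S W₀).ncard - 1 :=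
    Set.ncard_diff_singleton_of_mem hend
  have hpos : 0 < (Rset G v₀ S W₀).ncard := by
    rw [Set.ncard_pos (Set.toFinite _)]
    exact ⟨W₀.1, hend⟩
  have := Set.ncard_union_le Xt Xf
  rw [← hXsplit] at this
  omega

/-- Counting with a discount set `K` containing the endpoint. -/
lemma count_K {W₀ : Σ r : V, G.Walk v₀ r} (hW₀ : IsWit G v₀ S W₀)
    (hS : ∀ r x, r ∈ Rall G v₀ S → G.Adj r x → x ∈ S)
    {K X : Set V} (hendK : W₀.1 ∈ K)
    (hX : ∀ x ∈ X, x ∉ Rset G v₀ S W₀ ∧ ∃ r ∈ Rset G v₀ S W₀, G.Adj r x)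
    (hXK : ∀ x ∈ X, ∀ k ∈ K, ¬ G.Adj x k) :
    X.ncard ≤ 2 * (Rset G v₀ S W₀ \ K).ncard := by
  classical
  have hnodup : W₀.2.support.Nodup := hW₀.1.support_nodup
  have hdata : ∀ x ∈ X, ∃ w, w ∈ Rset G v₀ S W₀ ∧ ∃ i,
      (W₀.2.support[i]? = some x ∧ W₀.2.support[i+1]? = some w) ∨
      (W₀.2.support[i]? = some w ∧ W₀.2.support[i+1]? = some x) := by
    intro x hx
    obtain ⟨hxB, r₀, hr₀, hadj⟩ := hX x hx
    exact key hW₀ hS hr₀ hadj hxB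
  choose! w hwB idx hidx using hdata
  set L := W₀.2.support with hL
  have hadjw : ∀ x ∈ X, G.Adj x (w x) := by
    intro x hx
    rcases hidx x hx with ⟨h1, h2⟩ | ⟨h1, h2⟩
    · exact adj_of_consec W₀.2 h1 h2
    · exact (adj_of_consec W₀.2 h1 h2).symm
  have hwiK : ∀ x ∈ X, w x ∈ Rset G v₀ S W₀ \ K := by
    intro x hx
    refine ⟨hwB x hx, fun hk => hXK x hx (w x) hk (hadjw x hx)⟩
  set Xt := {x ∈ X | L[idx x]? = some x ∧ L[idx x + 1]? = some (w x)} with hXt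
  set Xf := {x ∈ X | ¬(L[idx x]? = some x ∧ L[idx x + 1]? = some (w x))} with hXf
  have hXsplit : X = Xt ∪ Xf := by
    ext a
    simp only [hXt, hXf, Set.mem_union, Set.mem_setOf_eq]
    tauto
  have hXfdata : ∀ x ∈ Xf, L[idx x]? = some (w x) ∧ L[idx x + 1]? = some x := by
    rintro x ⟨hx, hnot⟩
    rcases hidx x hx with h | h
    · exact absurd h hnot
    · exact h
  have hinjTt : Set.InjOn w Xt := by
    rintro x₁ ⟨hx₁, h₁, h₁'⟩ x₂ ⟨hx₂, h₂, h₂'⟩ heq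
    rw [heq] at h₁'
    have : idx x₁ + 1 = idx x₂ + 1 := nodup_getElem_inj hnodup h₁' h₂'
    have hii : idx x₁ = idx x₂ := by omega
    rw [hii] at h₁
    exact Option.some.inj (h₁.symm.trans h₂)
  have hinjTf : Set.InjOn w Xf := by
    intro x₁ hx₁ x₂ hx₂ heq
    obtain ⟨h₁, h₁'⟩ := hXfdata x₁ hx₁
    obtain ⟨h₂, h₂'⟩ := hXfdata x₂ hx₂
    rw [heq] at h₁
    have hii : idx x₁ = idx x₂ := nodup_getElem_inj hnodup h₁ h₂
    rw [hii] at h₁'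
    exact Option.some.inj (h₁'.symm.trans h₂')
  have hcard1 : Xt.ncard ≤ (Rset G v₀ S W₀ \ K).ncard :=
    Set.ncard_le_ncard_of_injOn w (fun x hx => hwiK x hx.1) hinjTt (Set.toFinite _)
  have hcard2 : Xf.ncard ≤ (Rset G v₀ S W₀ \ K).ncard :=
    Set.ncard_le_ncard_of_injOn w (fun x hx => hwiK x hx.1) hinjTf (Set.toFinite _)
  have := Set.ncard_union_le Xt Xf
  rw [← hXsplit] at this
  omega

end Count

section Assemble

variable [Fintype V]

variable (G v₀ S) in
def Closed (A : Set V) : Prop :=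
  ∀ W : Σ r : V, G.Walk v₀ r, IsWit G v₀ S W → W.1 ∈ A → Rset G v₀ S W ⊆ A

lemma piece (hS : ∀ r x, r ∈ Rall G v₀ S → G.Adj r x → x ∈ S) :
    ∀ n (A X : Set V), Closed G v₀ S A → X ⊆ A → A ⊆ Rall G v₀ S → X.Nonempty →
    (A \ X).ncard ≤ n →
    (extNbhd G X \ Rall G v₀ S).ncard ≤ 2 * X.ncard - 1 →
    ∃ Y, X ⊆ Y ∧ Y ⊆ A ∧ Closed G v₀ S Y ∧ Y.Nonempty ∧
      (extNbhd G Y \ Rall G v₀ S).ncard ≤ 2 * Y.ncard - 1 := by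
  intro n
  induction n with
  | zero =>
    intro A X hA hXA hAR hXne hn hbound
    -- A \ X is empty, so X is closed (any Rset lands in A = X)
    have hempty : A \ X = ∅ := by
      rw [← Set.ncard_eq_zero (Set.toFinite _)]; omega
    have hAX : A ⊆ X := by
      intro a ha
      by_contra hax
      have hmem : a ∈ A \ X := ⟨ha, hax⟩
      rw [hempty] at hmem
      exact hmem
    exact ⟨X, subset_rfl, hXA, fun W hW hend => (hA W hW (hXA hend)).trans hAX,
      hXne, hbound⟩
  | succ m ih =>
    intro A X hA hXA hAR hXne hn hbound
    by_cases hclosed : Closed G v₀ S X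
    · exact ⟨X, subset_rfl, hXA, hclosed, hXne, hbound⟩
    · simp only [Closed, not_forall] at hclosed
      obtain ⟨W, hWwit, hWend, hnot⟩ := hclosed
      set B := Rset G v₀ S W with hB
      have hBA : B ⊆ A := hA W hWwit (hXA hWend)
      obtain ⟨b, hbB, hbX⟩ := Set.not_subset.mp hnot
      set X' := X ∪ B with hX'
      have hX'A : X' ⊆ A := Set.union_subset hXA hBA
      -- cardinality decrease
      have hmono : (A \ X').ncard < (A \ X).ncard := by
        apply Set.ncard_lt_ncard _ (Set.toFinite _)
        constructor
        · exact Set.diff_subset_diff_right Set.subset_union_left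
        · intro hsub
          have : b ∈ A \ X' := hsub ⟨hBA hbB, hbX⟩
          exact this.2 (Or.inr hbB)
      -- the new external nbhd bound
      set Z := (extNbhd G X' \ Rall G v₀ S) \ (extNbhd G X \ Rall G v₀ S) with hZ
      have hZsub : extNbhd G X' \ Rall G v₀ S ⊆ (extNbhd G X \ Rall G v₀ S) ∪ Z := by
        intro a ha
        by_cases h : a ∈ extNbhd G X \ Rall G v₀ S
        · exact Or.inl h
        · exact Or.inr ⟨ha, h⟩
      have hZdata : ∀ z ∈ Z, z ∉ B ∧ ∃ r ∈ B, G.Adj r z := by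
        rintro z ⟨⟨⟨hzX', y, hy, hadj⟩, hzR⟩, hznX⟩
        have hznX' : z ∉ extNbhd G X := fun h => hznX ⟨h, hzR⟩
        have hzX : z ∉ X := fun h => hzX' (Or.inl h)
        refine ⟨fun h => hzX' (Or.inr h), ?_⟩
        rcases hy with hy | hy
        · exact absurd ⟨hzX, y, hy, hadj⟩ hznX'
        · exact ⟨y, hy, hadj⟩
      have hZK : ∀ z ∈ Z, ∀ k ∈ B ∩ X, ¬ G.Adj z k := by
        rintro z ⟨⟨⟨hzX', _⟩, hzR⟩, hznX⟩ k hk hadj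
        have hzX : z ∉ X := fun h => hzX' (Or.inl h)
        exact (fun h => hznX ⟨h, hzR⟩) ⟨hzX, k, hk.2, hadj.symm⟩
      have hZcard : Z.ncard ≤ 2 * (B \ (B ∩ X)).ncard :=
        count_K hWwit hS ⟨end_mem_rset hWwit, hWend⟩ hZdata hZK
      rw [Set.diff_self_inter] at hZcard
      have hXcard : X'.ncard = X.ncard + (B \ X).ncard := by
        rw [hX', ← Set.union_diff_self]
        exact Set.ncard_union_eq Set.disjoint_sdiff_right (Set.toFinite _) (Set.toFinite _)
      have hXpos : 0 < X.ncard := by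
        rw [Set.ncard_pos (Set.toFinite _)]; exact hXne
      have hbound' : (extNbhd G X' \ Rall G v₀ S).ncard ≤ 2 * X'.ncard - 1 := by
        have h1 : (extNbhd G X' \ Rall G v₀ S).ncard ≤
            (extNbhd G X \ Rall G v₀ S).ncard + Z.ncard :=
          le_trans (Set.ncard_le_ncard hZsub (Set.toFinite _)) (Set.ncard_union_le _ _)
        omega
      obtain ⟨Y, hXY', hrest⟩ :=
        ih A X' hA hX'A hAR (hXne.mono Set.subset_union_left) (by omega) hbound'
      exact ⟨Y, Set.subset_union_left.trans hXY', hrest⟩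

lemma master (hS : ∀ r x, r ∈ Rall G v₀ S → G.Adj r x → x ∈ S) :
    ∀ n (A : Set V), Closed G v₀ S A → A ⊆ Rall G v₀ S → A.ncard ≤ n →
    (extNbhd G A \ Rall G v₀ S).ncard ≤ 2 * A.ncard - 1 := by
  intro n
  induction n with
  | zero =>
    intro A hA hAR hn
    have : A = ∅ := by rw [← Set.ncard_eq_zero (Set.toFinite _)]; omega
    subst this
    have : extNbhd G (∅ : Set V) = ∅ := by
      ext a; simp [extNbhd]
    simp [this]
  | succ m ih =>
    intro A hA hAR hn
    rcases Set.eq_empty_or_nonempty A with rfl | ⟨r, hr⟩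
    · have : extNbhd G (∅ : Set V) = ∅ := by ext a; simp [extNbhd]
      simp [this]
    · obtain ⟨Q, hQpath, hQS⟩ := hAR hr
      set W : Σ r : V, G.Walk v₀ r := ⟨r, Q⟩ with hW
      have hWwit : IsWit G v₀ S W := ⟨hQpath, hQS⟩
      have hX₀A : Rset G v₀ S W ⊆ A := hA W hWwit hr
      have hX₀ne : (Rset G v₀ S W).Nonempty := ⟨r, end_mem_rset hWwit⟩
      have hX₀bound : (extNbhd G (Rset G v₀ S W) \ Rall G v₀ S).ncard ≤
          2 * (Rset G v₀ S W).ncard - 1 := by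
        apply count_base hWwit hS
        rintro x ⟨⟨hxB, y, hy, hadj⟩, _⟩
        exact ⟨hxB, y, hy, hadj⟩
      obtain ⟨Y, hXY, hYA, hYclosed, hYne, hYbound⟩ :=
        piece hS (A \ Rset G v₀ S W).ncard A (Rset G v₀ S W) hA hX₀A hAR hX₀ne le_rfl
          hX₀bound
      set A' := A \ Y with hA'
      have hA'closed : Closed G v₀ S A' := by
        intro W' hW' hendA' k hk
        refine ⟨hA W' hW' hendA'.1 hk, fun hkY => ?_⟩
        obtain ⟨W'', ⟨hreach, hW''⟩, hend''⟩ := hk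
        have hW''Y : W''.1 ∈ Y := hend''.symm ▸ hkY
        have : W'.1 ∈ Y := hYclosed W'' hW'' hW''Y ⟨W', ⟨reach_symm hreach, hW'⟩, rfl⟩
        exact hendA'.2 this
      have hA'card : A'.ncard = A.ncard - Y.ncard := Set.ncard_diff hYA (Set.toFinite _)
      have hYpos : 0 < Y.ncard := by
        rw [Set.ncard_pos (Set.toFinite _)]; exact hYne
      have hYcard : Y.ncard ≤ A.ncard := Set.ncard_le_ncard hYA (Set.toFinite _)
      have hih := ih A' hA'closed (fun a ha => hAR ha.1) (by omega)
      have hsplit : extNbhd G A \ Rall G v₀ S ⊆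
          (extNbhd G Y \ Rall G v₀ S) ∪ (extNbhd G A' \ Rall G v₀ S) := by
        rintro a ⟨⟨haA, y, hy, hadj⟩, haR⟩
        by_cases hyY : y ∈ Y
        · exact Or.inl ⟨⟨fun h => haA (hYA h), y, hyY, hadj⟩, haR⟩
        · exact Or.inr ⟨⟨fun h => haA h.1, y, ⟨hy, hyY⟩, hadj⟩, haR⟩
      have h1 := le_trans (Set.ncard_le_ncard hsplit (Set.toFinite _))
        (Set.ncard_union_le _ _)
      omega

end Assemble

end Main

end PosaProof

/-- **Pósa's lemma.** If `P` is a longest path in `G` with endpoints `v₀` and `v_t`, and `R`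
is the set of vertices `v` such that some path `P'` with `V(P') = V(P)` has endpoints `v₀`
and `v`, then `|N(R)| ≤ 2|R| − 1`. -/
theorem posa_lemma {V : Type*} [Fintype V] (G : SimpleGraph V) (v₀ vt : V)
    (P : G.Walk v₀ vt) (hP : P.IsPath)
    (hlongest : ∀ (a b : V) (Q : G.Walk a b), Q.IsPath → Q.length ≤ P.length) :
    (extNbhd G {v : V | ∃ P' : G.Walk v₀ v, P'.IsPath ∧
        {y : V | y ∈ P'.support} = {y : V | y ∈ P.support}}).ncard ≤
      2 * {v : V | ∃ P' : G.Walk v₀ v, P'.IsPath ∧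
        {y : V | y ∈ P'.support} = {y : V | y ∈ P.support}}.ncard - 1 := by
  classical
  open PosaProof in
  set S : Set V := {y : V | y ∈ P.support} with hSdef
  have hstmt : {v : V | ∃ P' : G.Walk v₀ v, P'.IsPath ∧
      {y : V | y ∈ P'.support} = {y : V | y ∈ P.support}} = PosaProof.Rall G v₀ S := rfl
  rw [hstmt]
  have hPwit : PosaProof.IsWit G v₀ S ⟨vt, P⟩ := ⟨hP, rfl⟩
  -- the longest-path closure property
  have hS : ∀ r x, r ∈ PosaProof.Rall G v₀ S → G.Adj r x → x ∈ S := by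
    intro r x hr hadj
    by_contra hxS
    obtain ⟨Q, hQpath, hQS⟩ := hr
    have hxsup : x ∉ Q.support := by
      intro h
      exact hxS (hQS ▸ (Set.mem_setOf_eq ▸ h) : x ∈ S)
    have hcon : (Q.concat hadj).IsPath := by
      rw [SimpleGraph.Walk.isPath_def, SimpleGraph.Walk.support_concat]
      rw [List.nodup_append]
      refine ⟨hQpath.support_nodup, List.nodup_singleton x, ?_⟩
      intro a ha b hb
      rw [List.mem_singleton] at hb
      subst hb
      rintro rfl
      exact hxsup ha
    have hlen := hlongest _ _ (Q.concat hadj) hcon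
    rw [SimpleGraph.Walk.length_concat] at hlen
    have heq : Q.length = P.length :=
      PosaProof.wit_length (W := ⟨r, Q⟩) ⟨hQpath, hQS⟩ (W' := ⟨vt, P⟩) hPwit
    omega
  have hclosed : PosaProof.Closed G v₀ S (PosaProof.Rall G v₀ S) :=
    fun W hW _ => PosaProof.rset_subset_rall
  have hmain := PosaProof.master hS (PosaProof.Rall G v₀ S).ncard
    (PosaProof.Rall G v₀ S) hclosed subset_rfl le_rfl
  have hdiffeq : extNbhd G (PosaProof.Rall G v₀ S) \ PosaProof.Rall G v₀ S =
      extNbhd G (PosaProof.Rall G v₀ S) := by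
    ext a
    simp only [Set.mem_diff, extNbhd, Set.mem_setOf_eq]
    tauto
  rw [hdiffeq] at hmain
  exact hmain
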